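/- Let A be a finite-dimensional algebra over a field which is n-Iwanaga-Gorenstein, i.e. the injective dimension of A as a left A-module and the projective dimension of D(A) as a left A-module are both at most n. Then for every finitely generated A-module M, the n-th syzygy Ω^n(M) is Gorenstein projective, i.e. Ext^i_A(Ω^n(M), A) = 0 for all i > 0. -/

import Mathlib

open CategoryTheory

noncomputable section

/-- Vanishing of the `n`-th Ext group of two `A`-modules. -/
def ExtVanish (A : Type) [Ring A] (n : ℕ) (X Y : ModuleCat.{0} A) : Prop :=
  Limits.IsZero (((Ext ℤ (ModuleCat.{0} A) n).obj (Opposite.op X)).obj Y)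

/-- `M` belongs to `add X`: it is a direct summand of a finite direct sum of copies of `X`. -/
def InAdd (A : Type) [Ring A] (X M : ModuleCat.{0} A) : Prop :=
  ∃ (n : ℕ) (i : M →ₗ[A] (Fin n → X)) (p : (Fin n → X) →ₗ[A] M),
    p.comp i = LinearMap.id

/-- `N` is a (first) syzygy of `M`: there is an exact sequence `0 → N → P → M → 0`
with `P` projective. -/
def IsSyzygyOf (A : Type) [Ring A] (N M : ModuleCat.{0} A) : Prop :=
  ∃ (P : ModuleCat.{0} A), Module.Projective A P ∧
    ∃ (ι : N →ₗ[A] P) (π : P →ₗ[A] M),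
      Function.Injective ι ∧ Function.Surjective π ∧ Function.Exact ι π

/-- `N` is an `n`-th syzygy of `M`. -/
def IsNthSyzygyOf (A : Type) [Ring A] : ℕ → ModuleCat.{0} A → ModuleCat.{0} A → Prop
  | 0, N, M => Nonempty (N ≅ M)
  | n + 1, N, M => ∃ K : ModuleCat.{0} A, IsSyzygyOf A K M ∧ IsNthSyzygyOf A n N K

/-- `N` is a (first) cosyzygy of `M`: there is an exact sequence `0 → M → I → N → 0`
with `I` injective. -/
def IsCosyzygyOf (A : Type) [Ring A] (N M : ModuleCat.{0} A) : Prop :=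
  ∃ (I : ModuleCat.{0} A), Module.Injective A I ∧
    ∃ (ι : M →ₗ[A] I) (π : I →ₗ[A] N),
      Function.Injective ι ∧ Function.Surjective π ∧ Function.Exact ι π

/-- `N` is an `n`-th cosyzygy of `M`. -/
def IsNthCosyzygyOf (A : Type) [Ring A] : ℕ → ModuleCat.{0} A → ModuleCat.{0} A → Prop
  | 0, N, M => Nonempty (N ≅ M)
  | n + 1, N, M => ∃ K : ModuleCat.{0} A, IsCosyzygyOf A K M ∧ IsNthCosyzygyOf A n N K

/-- The projective dimension of `M` is at most `n`. -/
def ProjDimLE (A : Type) [Ring A] (n : ℕ) (M : ModuleCat.{0} A) : Prop :=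
  ∃ K : ModuleCat.{0} A, IsNthSyzygyOf A n K M ∧ Module.Projective A K

/-- The injective dimension of `M` is at most `n`. -/
def InjDimLE (A : Type) [Ring A] (n : ℕ) (M : ModuleCat.{0} A) : Prop :=
  ∃ K : ModuleCat.{0} A, IsNthCosyzygyOf A n K M ∧ Module.Injective A K

/-- The underlying type of `D(A) = Hom_k(A, k)`. -/
def DualMod (k A : Type) [Field k] [Ring A] [Algebra k A] : Type := A →ₗ[k] k

instance (k A : Type) [Field k] [Ring A] [Algebra k A] : AddCommGroup (DualMod k A) :=
  inferInstanceAs (AddCommGroup (A →ₗ[k] k))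

/-- Auxiliary scalar action for `DualMod`. -/
def dualSMul (k A : Type) [Field k] [Ring A] [Algebra k A] (a : A) (φ : A →ₗ[k] k) :
    A →ₗ[k] k := φ.comp (LinearMap.mulRight k a)

/-- The left `A`-module structure on `D(A)`: `(a • φ) x = φ (x * a)`. -/
instance (k A : Type) [Field k] [Ring A] [Algebra k A] : Module A (DualMod k A) where
  smul a φ := dualSMul k A a φ
  one_smul φ := by
    show dualSMul k A 1 φ = φ
    unfold dualSMul; ext x; simp [LinearMap.mulRight]; rfl
  mul_smul a b φ := by
    show dualSMul k A (a * b) φ = dualSMul k A a (dualSMul k A b φ)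
    unfold dualSMul; ext x; simp [LinearMap.mulRight, mul_assoc]
    exact congrArg (show A →ₗ[k] k from φ) (mul_assoc x a b).symm
  smul_zero a := by
    show dualSMul k A a 0 = 0
    unfold dualSMul; ext x; simp
  smul_add a φ ψ := by
    show dualSMul k A a (φ + ψ) = dualSMul k A a φ + dualSMul k A a ψ
    unfold dualSMul; ext x; rfl
  add_smul a b φ := by
    show dualSMul k A (a + b) φ = dualSMul k A a φ + dualSMul k A b φ
    unfold dualSMul; ext x; simp [LinearMap.mulRight, mul_add]
    exact map_add (show A →ₗ[k] k from φ) (x * a) (x * b)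
  zero_smul φ := by
    show dualSMul k A 0 φ = 0
    unfold dualSMul; ext x; simp [LinearMap.mulRight]
    exact map_zero (show A →ₗ[k] k from φ)

/-- `D(A)`, the dual of the right regular module, as an object of `ModuleCat A`. -/
def DualA (k A : Type) [Field k] [Ring A] [Algebra k A] : ModuleCat.{0} A :=
  ModuleCat.of A (DualMod k A)

/-- The idempotent ideal `⟨e⟩ = AeA`, as a left submodule of `A`. -/
def idemIdeal (A : Type) [Ring A] (e : A) : Submodule A A :=
  Submodule.span A (Set.range fun b : A => e * b)

/-- The quotient `A/⟨e⟩` as a left `A`-module. -/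
def quotMod (A : Type) [Ring A] (e : A) : ModuleCat.{0} A :=
  ModuleCat.of A (A ⧸ idemIdeal A e)

/-- The left ideal `Ae = {x | x * e = x}` (for `e` idempotent), as a submodule of `A`. -/
def leftPart (A : Type) [Ring A] (e : A) : Submodule A A where
  carrier := {x | x * e = x}
  add_mem' := by intro a b ha hb; simp only [Set.mem_setOf_eq] at *; rw [add_mul, ha, hb]
  zero_mem' := by simp
  smul_mem' := by intro c x hx; simp only [Set.mem_setOf_eq, smul_eq_mul] at *;
                  rw [mul_assoc, hx]

/-- `Ae` as an object of `ModuleCat A`. -/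
def AeMod (A : Type) [Ring A] (e : A) : ModuleCat.{0} A :=
  ModuleCat.of A (leftPart A e)

/-- `M` is Gorenstein projective: `Ext^i_A(M, A) = 0` for all `i > 0`. -/
def IsGorensteinProjective (A : Type) [Ring A] (M : ModuleCat.{0} A) : Prop :=
  ∀ i : ℕ, 0 < i → ExtVanish A i M (ModuleCat.of A A)

/-- `M` is Gorenstein injective: `Ext^i_A(D(A), M) = 0` for all `i > 0`. -/
def IsGorensteinInjective (k A : Type) [Field k] [Ring A] [Algebra k A]
    (M : ModuleCat.{0} A) : Prop :=
  ∀ i : ℕ, 0 < i → ExtVanish A i (DualA k A) M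

/-- `M ∈ gen_l(Ae)`: `M` has a projective resolution whose terms in degrees `≤ l`
lie in `add (Ae)`. -/
def GenLE (A : Type) [Ring A] (e : A) (l : ℕ) (M : ModuleCat.{0} A) : Prop :=
  ∃ (P : ℕ → ModuleCat.{0} A) (d : ∀ n : ℕ, (P (n + 1) →ₗ[A] P n)) (π : P 0 →ₗ[A] M),
    (∀ n, Module.Projective A (P n)) ∧
    Function.Surjective π ∧
    Function.Exact (d 0) π ∧
    (∀ n, Function.Exact (d (n + 1)) (d n)) ∧
    (∀ n ≤ l, InAdd A (AeMod A e) (P n))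

namespace Stmt6Aux
open Limits Opposite
variable {A : Type} [Ring A]


lemma vanish_iff_exactAt (X Y : ModuleCat.{0} A) (Pres : ProjectiveResolution X) (i : ℕ) :
    ExtVanish A i X Y ↔ (Pres.complex.linearYonedaObj ℤ Y).ExactAt i := by
  rw [ExtVanish, HomologicalComplex.exactAt_iff_isZero_homology]
  exact ⟨fun h => h.of_iso (Pres.isoExt i Y).symm, fun h => h.of_iso (Pres.isoExt i Y)⟩

lemma exactAt_hom_iff (Xc : ChainComplex (ModuleCat.{0} A) ℕ) (Y : ModuleCat.{0} A) (m : ℕ) :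
    (Xc.linearYonedaObj ℤ Y).ExactAt (m+1) ↔
      ∀ f : Xc.X (m+1) ⟶ Y, Xc.d (m+2) (m+1) ≫ f = 0 →
        ∃ g : Xc.X m ⟶ Y, Xc.d (m+1) m ≫ g = f := by
  rw [HomologicalComplex.exactAt_iff' _ m (m+1) (m+2) (by simp) (by simp)]
  rw [ShortComplex.moduleCat_exact_iff]
  constructor
  · intro h f hf
    obtain ⟨g, hg⟩ := h f hf
    exact ⟨g, hg⟩
  · intro h f hf
    obtain ⟨g, hg⟩ := h f hf
    exact ⟨g, hg⟩

lemma extVanish_of_injective (X I : ModuleCat.{0} A) (hI : Module.Injective A I)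
    (i : ℕ) (hi : 0 < i) : ExtVanish A i X I := by
  obtain ⟨m, rfl⟩ : ∃ m, i = m + 1 := ⟨i - 1, by omega⟩
  have hinj : Injective I := Module.injective_object_of_injective_module (inj := hI)
  set Pres := ProjectiveResolution.of X
  rw [vanish_iff_exactAt X I Pres, exactAt_hom_iff]
  intro f hf
  exact ⟨(Pres.exact_succ m).descToInjective f hf,
    (Pres.exact_succ m).comp_descToInjective f hf⟩

/-- Postcomposition chain map between Hom-complexes. -/
def postcomp (Xc : ChainComplex (ModuleCat.{0} A) ℕ) {Y Z : ModuleCat.{0} A} (φ : Y ⟶ Z) :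
    Xc.linearYonedaObj ℤ Y ⟶ Xc.linearYonedaObj ℤ Z where
  f i := ((linearYoneda ℤ (ModuleCat.{0} A)).map φ).app (op (Xc.X i))
  comm' i j hij := by
    ext (g : Xc.X i ⟶ Y)
    simp [ChainComplex.linearYonedaObj]
    exact (Category.assoc (Xc.d j i) g φ).symm

@[simp] lemma postcomp_apply (Xc : ChainComplex (ModuleCat.{0} A) ℕ) {Y Z : ModuleCat.{0} A}
    (φ : Y ⟶ Z) (i : ℕ) (g : Xc.X i ⟶ Y) :
    ((postcomp Xc φ).f i) g = g ≫ φ := rfl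

lemma extVanish_of_cosyzygy {Y I K' : ModuleCat.{0} A} (hI : Module.Injective A I)
    (ι : Y →ₗ[A] I) (π : I →ₗ[A] K') (h1 : Function.Injective ι)
    (h2 : Function.Surjective π) (h3 : Function.Exact ι π)
    (X : ModuleCat.{0} A) (j : ℕ) (hj : 0 < j) (hK' : ExtVanish A j X K') :
    ExtVanish A (j+1) X Y := by
  have hinjI : Injective I := Module.injective_object_of_injective_module (inj := hI)
  set Pres := ProjectiveResolution.of X with hPres
  have hzero : ModuleCat.ofHom ι ≫ ModuleCat.ofHom π = 0 := by
    ext x; exact h3.apply_apply_eq_zero x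
  -- short complex in ModuleCat A
  set SA : ShortComplex (ModuleCat.{0} A) := ShortComplex.mk _ _ hzero with hSA
  have hSAmono : Mono SA.f := (ModuleCat.mono_iff_injective _).2 h1
  have hSAexact : SA.Exact := by
    rw [ShortComplex.moduleCat_exact_iff]
    intro x hx
    exact (h3 x).1 hx
  -- short complex of Hom complexes
  set S : ShortComplex (CochainComplex (ModuleCat.{0} ℤ) ℕ) :=
    ShortComplex.mk (postcomp Pres.complex (ModuleCat.ofHom ι))
      (postcomp Pres.complex (ModuleCat.ofHom π)) (by
        ext i (g : Pres.complex.X i ⟶ Y)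
        have : (g ≫ ModuleCat.ofHom ι) ≫ ModuleCat.ofHom π = 0 := by
          rw [Category.assoc, hzero, Limits.comp_zero]
        exact this) with hS
  have hSE : S.ShortExact := by
    rw [HomologicalComplex.shortExact_iff_degreewise_shortExact]
    intro i
    have hproj : Projective (Pres.complex.X i) := Pres.projective i
    have hepi : Epi (ModuleCat.ofHom π) := (ModuleCat.epi_iff_surjective _).2 h2
    refine ShortComplex.ShortExact.mk' ?_ ?_ ?_
    · -- exactness
      rw [ShortComplex.moduleCat_exact_iff]
      intro (g : Pres.complex.X i ⟶ I) hg
      have hg' : g ≫ SA.g = 0 := hg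
      exact ⟨hSAexact.lift g hg', hSAexact.lift_f g hg'⟩
    · -- mono
      rw [ModuleCat.mono_iff_injective]
      intro (g₁ : Pres.complex.X i ⟶ Y) (g₂ : Pres.complex.X i ⟶ Y) hg
      have : g₁ ≫ ModuleCat.ofHom ι = g₂ ≫ ModuleCat.ofHom ι := hg
      exact (cancel_mono SA.f).1 this
    · -- epi
      rw [ModuleCat.epi_iff_surjective]
      intro (g : Pres.complex.X i ⟶ K')
      exact ⟨Projective.factorThru g (ModuleCat.ofHom π),
        Projective.factorThru_comp g (ModuleCat.ofHom π)⟩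
  -- long exact sequence
  have les := hSE.homology_exact₁ j (j+1) (by simp)
  have h1z : IsZero (S.X₃.homology j) := by
    have := (vanish_iff_exactAt X K' Pres j).1 hK'
    rwa [HomologicalComplex.exactAt_iff_isZero_homology] at this
  have h2z : IsZero (S.X₂.homology (j+1)) := by
    have := (vanish_iff_exactAt X I Pres (j+1)).1
      (extVanish_of_injective X I hI (j+1) (by omega))
    rwa [HomologicalComplex.exactAt_iff_isZero_homology] at this
  have := les.isZero_X₂ (h1z.eq_of_src _ _) (h2z.eq_of_tgt _ _)
  rw [vanish_iff_exactAt X Y Pres, HomologicalComplex.exactAt_iff_isZero_homology]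
  exact this



lemma extVanish_congr_left {N M : ModuleCat.{0} A} (e : N ≅ M) (i : ℕ) (Y : ModuleCat.{0} A)
    (h : ExtVanish A i M Y) : ExtVanish A i N Y :=
  h.of_iso (((Ext ℤ (ModuleCat.{0} A) i).mapIso e.op).app Y).symm

lemma extVanish_congr_right {Y Z : ModuleCat.{0} A} (e : Y ≅ Z) (i : ℕ) (X : ModuleCat.{0} A)
    (h : ExtVanish A i X Z) : ExtVanish A i X Y :=
  h.of_iso ((((Ext ℤ (ModuleCat.{0} A) i).obj (op X)).mapIso e))

lemma cosyz_vanish : ∀ (m : ℕ) (Y K : ModuleCat.{0} A), Module.Injective A K →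
    IsNthCosyzygyOf A m K Y → ∀ (X : ModuleCat.{0} A) (i : ℕ), m < i → ExtVanish A i X Y := by
  intro m
  induction m with
  | zero =>
    rintro Y K hK ⟨e⟩ X i hi
    exact extVanish_congr_right e.symm i X (extVanish_of_injective X K hK i hi)
  | succ m IH =>
    rintro Y K hK ⟨K', ⟨I, hI, ι, π, h1, h2, h3⟩, hrest⟩ X i hi
    obtain ⟨j, rfl⟩ : ∃ j, i = j + 1 := ⟨i - 1, by omega⟩
    exact extVanish_of_cosyzygy hI ι π h1 h2 h3 X j (by omega)
      (IH K' K hK hrest X j (by omega))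

section Surgery

variable {N P K : ModuleCat.{0} A} (Q : ProjectiveResolution N)
  (ι : N →ₗ[A] P) (π : P →ₗ[A] K)

/-- degree-0 part of the resolution `Q` of `N`. -/
def f₀ : Q.complex.X 0 ⟶ N := ((ChainComplex.toSingle₀Equiv Q.complex N) Q.π).1

lemma d_f₀ : Q.complex.d 1 0 ≫ f₀ Q = 0 := ((ChainComplex.toSingle₀Equiv Q.complex N) Q.π).2

lemma f₀_surjective : Function.Surjective (f₀ Q) := by
  have : Epi (Q.π.f 0) := inferInstance
  exact (ModuleCat.epi_iff_surjective (f₀ Q)).1 this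

/-- the objects of the surgery complex. -/
def XR (P : ModuleCat.{0} A) : ℕ → ModuleCat.{0} A := fun n => match n with
  | 0 => P
  | (j+1) => Q.complex.X j

/-- the differentials of the surgery complex. -/
def dR : ∀ n : ℕ, XR Q P (n+1) ⟶ XR Q P n := fun n => match n with
  | 0 => (f₀ Q ≫ ModuleCat.ofHom ι : Q.complex.X 0 ⟶ P)
  | (j+1) => Q.complex.d (j+1) j

/-- the surgery complex: resolution of `K` built from `P` and a resolution of `N`. -/
def Rcx : ChainComplex (ModuleCat.{0} A) ℕ :=
  ChainComplex.of (XR Q P) (dR Q ι) (by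
    rintro (_ | n)
    · show Q.complex.d 1 0 ≫ (f₀ Q ≫ ModuleCat.ofHom ι) = 0
      rw [← Category.assoc, d_f₀, Limits.zero_comp]
    · exact Q.complex.d_comp_d _ _ _)


variable (hzero : ModuleCat.ofHom ι ≫ ModuleCat.ofHom π = 0)

lemma Rcx_d_one_zero : (Rcx Q ι (P := P)).d 1 0 = f₀ Q ≫ ModuleCat.ofHom ι :=
  ChainComplex.of_d (XR Q P) (dR Q ι) 0

lemma Rcx_d_succ (n : ℕ) :
    (Rcx Q ι (P := P)).d (n+2) (n+1) = Q.complex.d (n+1) n :=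
  ChainComplex.of_d _ _ (n+1)

/-- The augmentation of the surgery complex. -/
def πR : Rcx Q ι (P := P) ⟶ (ChainComplex.single₀ (ModuleCat.{0} A)).obj K :=
  (ChainComplex.toSingle₀Equiv _ K).symm ⟨ModuleCat.ofHom π, by
    rw [Rcx_d_one_zero]; exact (Category.assoc (f₀ Q) (ModuleCat.ofHom ι) (ModuleCat.ofHom π)).trans ((congrArg (f₀ Q ≫ ·) hzero).trans Limits.comp_zero)⟩

/-- The surgery complex is a projective resolution of `K`. -/
def Rres (hP : Module.Projective A P) (h1 : Function.Injective ι)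
    (h2 : Function.Surjective π) (h3 : Function.Exact ι π) :
    ProjectiveResolution K where
  complex := Rcx Q ι (P := P)
  projective n := by
    match n with
    | 0 => exact (IsProjective.iff_projective _).mp hP
    | (j+1) => exact Q.projective j
  π := πR Q ι π hzero
  quasiIso := ⟨fun n => by
    cases n with
    | zero =>
      rw [ChainComplex.quasiIsoAt₀_iff, ShortComplex.quasiIso_iff_of_zeros']
      · constructor
        · rw [ShortComplex.moduleCat_exact_iff]
          intro (x : P) hx
          have hx' : π x = 0 := by
            have h : ((πR Q ι π hzero (P := P)).f 0) x = 0 := hx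
            simp only [πR, ChainComplex.toSingle₀Equiv_symm_apply_f_zero] at h
            exact h
          obtain ⟨y, hy⟩ := (h3 x).1 hx'
          obtain ⟨z, hz⟩ := f₀_surjective Q y
          refine ⟨z, ?_⟩
          show ((Rcx Q ι).d 1 0) z = x
          rw [Rcx_d_one_zero]
          show ι (f₀ Q z) = x
          rw [hz]; exact hy
        · rw [ModuleCat.epi_iff_surjective]
          intro (y : K)
          obtain ⟨x, hx⟩ := h2 y
          refine ⟨x, ?_⟩
          show ((πR Q ι π hzero (P := P)).f 0) x = y
          simp only [πR, ChainComplex.toSingle₀Equiv_symm_apply_f_zero]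
          exact hx
      all_goals rfl
    | succ n =>
      rw [quasiIsoAt_iff_exactAt']
      · rw [HomologicalComplex.exactAt_iff' _ (n+2) (n+1) n (by simp) (by simp),
          ShortComplex.moduleCat_exact_iff]
        match n with
        | 0 =>
          intro (x : Q.complex.X 0) hx
          have hx' : (Q.π.f 0) x = 0 := by
            have h : ((Rcx Q ι (P := P)).d 1 0) x = 0 := hx
            rw [Rcx_d_one_zero] at h
            have h' : ι ((f₀ Q) x) = 0 := h
            have := h1 (by rw [h', map_zero] : ι ((f₀ Q) x) = ι 0)
            exact this
          obtain ⟨y, hy⟩ := (ShortComplex.moduleCat_exact_iff _).1 Q.exact₀ x hx'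
          refine ⟨y, ?_⟩
          show ((Rcx Q ι (P := P)).d 2 1) y = x
          rw [Rcx_d_succ]
          exact hy
        | (m+1) =>
          intro (x : Q.complex.X (m+1)) hx
          have hx' : (Q.complex.d (m+1) m) x = 0 := by
            have h : ((Rcx Q ι (P := P)).d (m+2) (m+1)) x = 0 := hx
            rwa [Rcx_d_succ] at h
          obtain ⟨y, hy⟩ := (ShortComplex.moduleCat_exact_iff _).1 (Q.exact_succ m) x hx'
          refine ⟨y, ?_⟩
          show ((Rcx Q ι (P := P)).d (m+3) (m+2)) y = x
          rw [Rcx_d_succ]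
          exact hy
      · apply ChainComplex.exactAt_succ_single_obj⟩

end Surgery

lemma extVanish_of_syzygy {N P K : ModuleCat.{0} A} (hP : Module.Projective A P)
    (ι : N →ₗ[A] P) (π : P →ₗ[A] K) (h1 : Function.Injective ι)
    (h2 : Function.Surjective π) (h3 : Function.Exact ι π)
    (Y : ModuleCat.{0} A) (m : ℕ)
    (h : ExtVanish A (m+2) K Y) : ExtVanish A (m+1) N Y := by
  have hzero : ModuleCat.ofHom ι ≫ ModuleCat.ofHom π = 0 := by
    ext x; exact h3.apply_apply_eq_zero x
  set Q := ProjectiveResolution.of N with hQ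
  set R := Rres Q ι π hzero hP h1 h2 h3 with hR
  rw [vanish_iff_exactAt K Y R (m+2), exactAt_hom_iff] at h
  rw [vanish_iff_exactAt N Y Q (m+1), exactAt_hom_iff]
  intro f hf
  obtain ⟨g, hg⟩ := h f (by
    show (Rcx Q ι (P := P)).d (m+3) (m+2) ≫ f = 0
    rw [Rcx_d_succ]
    exact hf)
  refine ⟨g, ?_⟩
  have hg' : (Rcx Q ι (P := P)).d (m+2) (m+1) ≫ g = f := hg
  rwa [Rcx_d_succ] at hg'



lemma syz_vanish : ∀ (m : ℕ) (N M : ModuleCat.{0} A), IsNthSyzygyOf A m N M →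
    ∀ (Y : ModuleCat.{0} A) (i : ℕ), 0 < i → ExtVanish A (i + m) M Y → ExtVanish A i N Y := by
  intro m
  induction m with
  | zero =>
    rintro N M ⟨e⟩ Y i _ h
    exact extVanish_congr_left e i Y h
  | succ m IH =>
    rintro N M ⟨K, ⟨P, hP, ι, π, h1, h2, h3⟩, hNK⟩ Y i hi h
    refine IH N K hNK Y i hi ?_
    obtain ⟨l, hl⟩ : ∃ l, i + m = l + 1 := ⟨i + m - 1, by omega⟩
    rw [hl]
    exact extVanish_of_syzygy hP ι π h1 h2 h3 Y l (by
      have hll : i + (m + 1) = l + 2 := by omega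
      rwa [hll] at h)


end Stmt6Aux

/-- Over an `n`-Iwanaga-Gorenstein algebra, `n`-th syzygies of
finitely generated modules are Gorenstein projective. -/
theorem stmt_6 (k A : Type) [Field k] [Ring A] [Algebra k A] [FiniteDimensional k A]
    (n : ℕ)
    (hinj : InjDimLE A n (ModuleCat.of A A))
    (hproj : ProjDimLE A n (DualA k A)) :
    ∀ (M N : ModuleCat.{0} A), Module.Finite A M →
      IsNthSyzygyOf A n N M → IsGorensteinProjective A N := by
  rintro M N _ hsyz i hi
  obtain ⟨Kc, hcos, hKinj⟩ := hinj
  exact Stmt6Aux.syz_vanish n N M hsyz (ModuleCat.of A A) i hi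
    (Stmt6Aux.cosyz_vanish n (ModuleCat.of A A) Kc hKinj hcos M (i + n) (by omega))

end
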